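/- Let A be the 4×4 real matrix with rows (0,1,0,0), (-1,0,0,0), (0,0,0,-1), (0,0,1,0), and let Λ²A be the induced linear map on the second exterior power Λ²(ℝ⁴). Then the fixed subspace {ω ∈ Λ²(ℝ⁴) : (Λ²A) ω = ω} has dimension 4. -/

import Mathlib

open ExteriorAlgebra

noncomputable abbrev ee (i : Fin 4) : Fin 4 → ℝ := Pi.single i 1

noncomputable def wdg (i j : Fin 4) : ExteriorAlgebra ℝ (Fin 4 → ℝ) :=
  ι ℝ (ee i) * ι ℝ (ee j)

noncomputable def Dmap (i j : Fin 4) : (Fin 4 → ℝ) [⋀^Fin 2]→ₗ[ℝ] ℝ :=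
  (Matrix.detRowAlternating).compLinearMap (LinearMap.funLeft ℝ ℝ ![i, j])

noncomputable def fam (i j : Fin 4) : ∀ n : ℕ, (Fin 4 → ℝ) [⋀^Fin n]→ₗ[ℝ] ℝ
  | 2 => Dmap i j
  | _ => 0

noncomputable def ph (i j : Fin 4) : ExteriorAlgebra ℝ (Fin 4 → ℝ) →ₗ[ℝ] ℝ :=
  ExteriorAlgebra.liftAlternating (fam i j)

lemma mul_eq_ιMulti (a b : Fin 4 → ℝ) :
    ι ℝ a * ι ℝ b = ιMulti ℝ 2 ![a, b] := by
  simp [ιMulti_apply, List.ofFn_succ]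

lemma ph_mul (i j : Fin 4) (a b : Fin 4 → ℝ) :
    ph i j (ι ℝ a * ι ℝ b) = a i * b j - a j * b i := by
  rw [mul_eq_ιMulti, ph, ExteriorAlgebra.liftAlternating_apply_ιMulti]
  show Dmap i j ![a, b] = _
  rw [Dmap, AlternatingMap.compLinearMap_apply]
  change Matrix.det (Matrix.of _) = _
  rw [Matrix.det_fin_two]
  simp [LinearMap.funLeft_apply]
  rfl

lemma ph_wdg (i j k l : Fin 4) :
    ph i j (wdg k l) =
      (if j = l ∧ i = k then (1:ℝ) else 0) - (if i = l ∧ j = k then (1:ℝ) else 0) := by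
  simp [wdg, ph_mul, Pi.single_apply, ite_and]

lemma hswap (x y : Fin 4 → ℝ) : ι ℝ y * ι ℝ x = -(ι ℝ x * ι ℝ y) :=
  eq_neg_of_add_eq_zero_left (ι_add_mul_swap y x)

lemma wdg_mem (i j : Fin 4) : wdg i j ∈ ⋀[ℝ]^2 (Fin 4 → ℝ) := by
  rw [wdg, mul_eq_ιMulti]
  exact ιMulti_range ℝ 2 ⟨![ee i, ee j], rfl⟩

lemma expand (a b : Fin 4 → ℝ) :
    ι ℝ a * ι ℝ b =
      (a 0 * b 1 - a 1 * b 0) • wdg 0 1 + (a 0 * b 2 - a 2 * b 0) • wdg 0 2 +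
      (a 0 * b 3 - a 3 * b 0) • wdg 0 3 + (a 1 * b 2 - a 2 * b 1) • wdg 1 2 +
      (a 1 * b 3 - a 3 * b 1) • wdg 1 3 + (a 2 * b 3 - a 3 * b 2) • wdg 2 3 := by
  have ha : a = a 0 • ee 0 + a 1 • ee 1 + a 2 • ee 2 + a 3 • ee 3 := by
    funext k; fin_cases k <;> simp [Pi.single_apply]
  have hb : b = b 0 • ee 0 + b 1 • ee 1 + b 2 • ee 2 + b 3 • ee 3 := by
    funext k; fin_cases k <;> simp [Pi.single_apply]
  conv_lhs => rw [ha, hb]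
  simp only [map_add, map_smul, add_mul, mul_add, smul_mul_assoc, mul_smul_comm,
    ι_sq_zero, smul_zero, add_zero, zero_add, wdg]
  rw [hswap (ee 0) (ee 1), hswap (ee 0) (ee 2), hswap (ee 0) (ee 3),
    hswap (ee 1) (ee 2), hswap (ee 1) (ee 3), hswap (ee 2) (ee 3)]
  module

lemma repr2 {x : ExteriorAlgebra ℝ (Fin 4 → ℝ)} (hx : x ∈ ⋀[ℝ]^2 (Fin 4 → ℝ)) :
    x = ph 0 1 x • wdg 0 1 + ph 0 2 x • wdg 0 2 + ph 0 3 x • wdg 0 3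
      + ph 1 2 x • wdg 1 2 + ph 1 3 x • wdg 1 3 + ph 2 3 x • wdg 2 3 := by
  set P : ExteriorAlgebra ℝ (Fin 4 → ℝ) →ₗ[ℝ] ExteriorAlgebra ℝ (Fin 4 → ℝ) :=
    (ph 0 1).smulRight (wdg 0 1) + (ph 0 2).smulRight (wdg 0 2) +
    (ph 0 3).smulRight (wdg 0 3) + (ph 1 2).smulRight (wdg 1 2) +
    (ph 1 3).smulRight (wdg 1 3) + (ph 2 3).smulRight (wdg 2 3) with hP
  have hker : ⋀[ℝ]^2 (Fin 4 → ℝ) ≤ LinearMap.ker (LinearMap.id - P) := by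
    rw [← ιMulti_span_fixedDegree, Submodule.span_le]
    rintro _ ⟨v, rfl⟩
    simp only [SetLike.mem_coe, LinearMap.mem_ker, LinearMap.sub_apply, LinearMap.id_apply]
    have hv : ιMulti ℝ 2 v = ι ℝ (v 0) * ι ℝ (v 1) := by
      rw [mul_eq_ιMulti]; congr 1; funext k; fin_cases k <;> rfl
    rw [hv, expand (v 0) (v 1), sub_eq_zero, hP]
    simp only [LinearMap.add_apply, LinearMap.smulRight_apply, map_add, map_smul, ph_wdg]
    simp
  have h := hker hx
  simp only [LinearMap.mem_ker, LinearMap.sub_apply, LinearMap.id_apply, sub_eq_zero, hP,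
    LinearMap.add_apply, LinearMap.smulRight_apply] at h
  linear_combination (norm := module) h

theorem stmt_1 (A : Matrix (Fin 4) (Fin 4) ℝ)
    (hA : A = !![0,1,0,0; -1,0,0,0; 0,0,0,-1; 0,0,1,0]) :
    Module.finrank ℝ
      ↥(Module.End.eigenspace
          ((ExteriorAlgebra.map (Matrix.toLin' A)).toLinearMap) 1
        ⊓ ⋀[ℝ]^2 (Fin 4 → ℝ)) = 4 := by
  subst hA
  set A : Matrix (Fin 4) (Fin 4) ℝ := !![0,1,0,0; -1,0,0,0; 0,0,0,-1; 0,0,1,0] with hA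
  set F := ExteriorAlgebra.map (M := Fin 4 → ℝ) (N := Fin 4 → ℝ) (Matrix.toLin' A) with hF
  have hf0 : Matrix.toLin' A (ee 0) = -(ee 1) := by
    funext k; fin_cases k <;>
      simp [Matrix.toLin'_apply, Matrix.mulVec, dotProduct, Fin.sum_univ_four,
        Pi.single_apply, hA]
  have hf1 : Matrix.toLin' A (ee 1) = ee 0 := by
    funext k; fin_cases k <;>
      simp [Matrix.toLin'_apply, Matrix.mulVec, dotProduct, Fin.sum_univ_four,
        Pi.single_apply, hA]
  have hf2 : Matrix.toLin' A (ee 2) = ee 3 := by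
    funext k; fin_cases k <;>
      simp [Matrix.toLin'_apply, Matrix.mulVec, dotProduct, Fin.sum_univ_four,
        Pi.single_apply, hA]
  have hf3 : Matrix.toLin' A (ee 3) = -(ee 2) := by
    funext k; fin_cases k <;>
      simp [Matrix.toLin'_apply, Matrix.mulVec, dotProduct, Fin.sum_univ_four,
        Pi.single_apply, hA]
  have hw01 : F (wdg 0 1) = wdg 0 1 := by
    rw [wdg, map_mul, map_apply_ι, map_apply_ι, hf0, hf1, map_neg, neg_mul, hswap]
    simp [wdg]
  have hw02 : F (wdg 0 2) = -(wdg 1 3) := by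
    rw [wdg, map_mul, map_apply_ι, map_apply_ι, hf0, hf2, map_neg, neg_mul]
    simp [wdg]
  have hw03 : F (wdg 0 3) = wdg 1 2 := by
    rw [wdg, map_mul, map_apply_ι, map_apply_ι, hf0, hf3, map_neg, map_neg, neg_mul, mul_neg]
    simp [wdg]
  have hw12 : F (wdg 1 2) = wdg 0 3 := by
    rw [wdg, map_mul, map_apply_ι, map_apply_ι, hf1, hf2]; rfl
  have hw13 : F (wdg 1 3) = -(wdg 0 2) := by
    rw [wdg, map_mul, map_apply_ι, map_apply_ι, hf1, hf3, map_neg, mul_neg]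
    simp [wdg]
  have hw23 : F (wdg 2 3) = wdg 2 3 := by
    rw [wdg, map_mul, map_apply_ι, map_apply_ι, hf2, hf3, map_neg, mul_neg, hswap]
    simp [wdg]
  set u : Fin 4 → ExteriorAlgebra ℝ (Fin 4 → ℝ) :=
    ![wdg 0 1, wdg 2 3, wdg 0 2 - wdg 1 3, wdg 0 3 + wdg 1 2] with hu
  have hSeq : Module.End.eigenspace (F.toLinearMap) 1 ⊓ ⋀[ℝ]^2 (Fin 4 → ℝ)
      = Submodule.span ℝ (Set.range u) := by
    apply le_antisymm
    · intro x hx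
      rw [Submodule.mem_inf] at hx
      obtain ⟨hx1, hx2⟩ := hx
      rw [Module.End.mem_eigenspace_iff, AlgHom.toLinearMap_apply, one_smul] at hx1
      have hrx := repr2 hx2
      have hFx : x = ph 0 1 x • wdg 0 1 + ph 0 2 x • (-(wdg 1 3)) + ph 0 3 x • wdg 1 2
          + ph 1 2 x • wdg 0 3 + ph 1 3 x • (-(wdg 0 2)) + ph 2 3 x • wdg 2 3 := by
        conv_lhs => rw [← hx1, hrx]
        simp only [map_add, map_smul, hw01, hw02, hw03, hw12, hw13, hw23]
      have h13 : ph 1 3 x = -(ph 0 2 x) := by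
        have h := congrArg (ph 0 2) hFx
        simp only [map_add, map_smul, map_neg, ph_wdg, smul_eq_mul] at h
        simp at h
        linarith
      have h12 : ph 1 2 x = ph 0 3 x := by
        have h := congrArg (ph 1 2) hFx
        simp only [map_add, map_smul, map_neg, ph_wdg, smul_eq_mul] at h
        simp at h
        linarith
      have hxu : x = ph 0 1 x • u 0 + ph 2 3 x • u 1 + ph 0 2 x • u 2 + ph 0 3 x • u 3 := by
        conv_lhs => rw [hrx]
        rw [h13, h12]
        simp only [hu, Matrix.cons_val_zero, Matrix.cons_val_one, Matrix.head_cons,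
          Matrix.cons_val_two, Matrix.tail_cons, Matrix.cons_val_three]
        module
      rw [hxu]
      have hm : ∀ i : Fin 4, u i ∈ Submodule.span ℝ (Set.range u) := fun i =>
        Submodule.subset_span ⟨i, rfl⟩
      exact Submodule.add_mem _ (Submodule.add_mem _ (Submodule.add_mem _
        (Submodule.smul_mem _ _ (hm 0)) (Submodule.smul_mem _ _ (hm 1)))
        (Submodule.smul_mem _ _ (hm 2))) (Submodule.smul_mem _ _ (hm 3))
    · rw [Submodule.span_le]
      rintro _ ⟨i, rfl⟩
      fin_cases i
      · exact Submodule.mem_inf.mpr ⟨Module.End.mem_eigenspace_iff.mpr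
          (by show F (wdg 0 1) = 1 • wdg 0 1; rw [one_smul]; exact hw01), wdg_mem 0 1⟩
      · exact Submodule.mem_inf.mpr ⟨Module.End.mem_eigenspace_iff.mpr
          (by show F (wdg 2 3) = 1 • wdg 2 3; rw [one_smul]; exact hw23), wdg_mem 2 3⟩
      · refine Submodule.mem_inf.mpr ⟨Module.End.mem_eigenspace_iff.mpr ?_,
          Submodule.sub_mem _ (wdg_mem 0 2) (wdg_mem 1 3)⟩
        show F (wdg 0 2 - wdg 1 3) = 1 • (wdg 0 2 - wdg 1 3)
        rw [one_smul, map_sub, hw02, hw13]; abel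
      · refine Submodule.mem_inf.mpr ⟨Module.End.mem_eigenspace_iff.mpr ?_,
          Submodule.add_mem _ (wdg_mem 0 3) (wdg_mem 1 2)⟩
        show F (wdg 0 3 + wdg 1 2) = 1 • (wdg 0 3 + wdg 1 2)
        rw [one_smul, map_add, hw03, hw12]; abel
  have hind : LinearIndependent ℝ u := by
    rw [Fintype.linearIndependent_iff]
    intro g hg
    have e01 := congrArg (ph 0 1) hg
    have e23 := congrArg (ph 2 3) hg
    have e02 := congrArg (ph 0 2) hg
    have e03 := congrArg (ph 0 3) hg
    simp only [Fin.sum_univ_four, hu, Matrix.cons_val_zero, Matrix.cons_val_one,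
      Matrix.head_cons, Matrix.cons_val_two, Matrix.tail_cons, Matrix.cons_val_three,
      map_add, map_smul, map_sub, map_zero, ph_wdg, smul_eq_mul] at e01 e23 e02 e03
    simp at e01 e23 e02 e03
    intro i; fin_cases i <;> assumption
  rw [hSeq, finrank_span_eq_card hind, Fintype.card_fin]
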